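/- Fix d > 0, α₁, α₂ ∈ ℝ and k > 0 with cos(2 k d) ≠ 0 and D := (α₁ α₂ − k²) sin(2 k d) + k (α₁ + α₂) cos(2 k d) ≠ 0. For u, u′ ∈ [−d, d] define g(u, u′) := (1/(2 k d²)) [ sin(k(2d − |u − u′|))/cos(2kd) − ( k(α₁ − α₂) sin(k(u + u′)) − (α₁ α₂ + k²) cos(k(u + u′)) ) / D − (α₁ α₂ − k²) cos(k(u − u′)) / (cos(2kd) · D) ]. Then for every fixed u′ ∈ (−d, d): (i) u ↦ g(u, u′) is continuous on [−d, d] and twice continuously differentiable on [−d, u′) and on (u′, d]; (ii) −∂²g/∂u²(u, u′) = k² g(u, u′) for all u ≠ u′; (iii) g satisfies the Robin boundary conditions ∂g/∂u(d, u′) + α₁ g(d, u′) = 0 and −∂g/∂u(−d, u′) + α₂ g(−d, u′) = 0; (iv) the u-derivative has the jump lim_{u↓u′} ∂g/∂u(u, u′) − lim_{u↑u′} ∂g/∂u(u, u′) = −1/d². (These properties identify g as the integral kernel of the resolvent (h_{α₁,α₂} − k²)^{−1} of the Robin Laplacian on (−d,d).) -/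

import Mathlib

open Filter Topology

/-- The denominator `D = (α₁α₂ − k²) sin(2kd) + k(α₁+α₂) cos(2kd)`. -/
noncomputable def Dden (d α₁ α₂ k : ℝ) : ℝ :=
  (α₁ * α₂ - k ^ 2) * Real.sin (2 * k * d) + k * (α₁ + α₂) * Real.cos (2 * k * d)

/-- The integral kernel of the resolvent `(h_{α₁,α₂} − k²)⁻¹` of the Robin Laplacian
on `(−d,d)`. -/
noncomputable def gker (d α₁ α₂ k u u' : ℝ) : ℝ :=
  (1 / (2 * k * d ^ 2)) *
    (Real.sin (k * (2 * d - |u - u'|)) / Real.cos (2 * k * d)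
      - (k * (α₁ - α₂) * Real.sin (k * (u + u'))
          - (α₁ * α₂ + k ^ 2) * Real.cos (k * (u + u'))) / Dden d α₁ α₂ k
      - (α₁ * α₂ - k ^ 2) * Real.cos (k * (u - u'))
          / (Real.cos (2 * k * d) * Dden d α₁ α₂ k))

/-- The smooth one-sided version of the kernel: `s = 1` gives the branch for `u ≥ u'`,
`s = -1` the branch for `u ≤ u'`. -/
noncomputable def Fker (d α₁ α₂ k u' s u : ℝ) : ℝ :=
  (1 / (2 * k * d ^ 2)) *
    (Real.sin (k * (2 * d - s * (u - u'))) / Real.cos (2 * k * d)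
      - (k * (α₁ - α₂) * Real.sin (k * (u + u'))
          - (α₁ * α₂ + k ^ 2) * Real.cos (k * (u + u'))) / Dden d α₁ α₂ k
      - (α₁ * α₂ - k ^ 2) * Real.cos (k * (u - u'))
          / (Real.cos (2 * k * d) * Dden d α₁ α₂ k))

/-- The `u`-derivative of `Fker`. -/
noncomputable def Fker' (d α₁ α₂ k u' s u : ℝ) : ℝ :=
  (1 / (2 * k * d ^ 2)) *
    (-(k * s) * Real.cos (k * (2 * d - s * (u - u'))) / Real.cos (2 * k * d)
      - (k * (α₁ - α₂) * (k * Real.cos (k * (u + u')))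
          + (α₁ * α₂ + k ^ 2) * (k * Real.sin (k * (u + u')))) / Dden d α₁ α₂ k
      + (α₁ * α₂ - k ^ 2) * (k * Real.sin (k * (u - u')))
          / (Real.cos (2 * k * d) * Dden d α₁ α₂ k))

lemma contDiff_Fker (d α₁ α₂ k u' s : ℝ) :
    ContDiff ℝ 2 (fun u => Fker d α₁ α₂ k u' s u) := by
  have hs : ContDiff ℝ 2 Real.sin := Real.contDiff_sin.of_le le_top
  have hc : ContDiff ℝ 2 Real.cos := Real.contDiff_cos.of_le le_top
  have g1 : ContDiff ℝ 2 (fun u : ℝ => k * (2*d - s*(u-u'))) := by fun_prop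
  have g2 : ContDiff ℝ 2 (fun u : ℝ => k * (u+u')) := by fun_prop
  have g3 : ContDiff ℝ 2 (fun u : ℝ => k * (u-u')) := by fun_prop
  simp only [Fker]
  exact contDiff_const.mul ((((hs.comp g1).div_const _).sub
    ((((contDiff_const.mul (hs.comp g2))).sub (contDiff_const.mul (hc.comp g2))).div_const _)).sub
    ((contDiff_const.mul (hc.comp g3)).div_const _))

lemma hasDerivAt_Fker (d α₁ α₂ k u' s u : ℝ) :
    HasDerivAt (fun u => Fker d α₁ α₂ k u' s u) (Fker' d α₁ α₂ k u' s u) u := by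
  have h1 : HasDerivAt (fun v : ℝ => k * (2*d - s*(v-u'))) (-(k*s)) u := by
    simpa using ((((hasDerivAt_id u).sub_const u').const_mul s).const_sub (2*d)).const_mul k
  have h2 : HasDerivAt (fun v : ℝ => k * (v+u')) k u := by
    simpa using ((hasDerivAt_id u).add_const u').const_mul k
  have h3 : HasDerivAt (fun v : ℝ => k * (v-u')) k u := by
    simpa using ((hasDerivAt_id u).sub_const u').const_mul k
  have key := ((((h1.sin.div_const (Real.cos (2*k*d))).sub
      (((h2.sin.const_mul (k*(α₁-α₂))).sub (h2.cos.const_mul (α₁*α₂+k^2))).div_const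
        (Dden d α₁ α₂ k))).sub
      ((h3.cos.const_mul (α₁*α₂-k^2)).div_const (Real.cos (2*k*d) * Dden d α₁ α₂ k))).const_mul
      (1/(2*k*d^2)))
  rw [show Fker' d α₁ α₂ k u' s u =
      1 / (2 * k * d ^ 2) *
      (Real.cos (k * (2 * d - s * (u - u'))) * -(k * s) / Real.cos (2 * k * d) -
          (k * (α₁ - α₂) * (Real.cos (k * (u + u')) * k) -
            (α₁ * α₂ + k ^ 2) * (-Real.sin (k * (u + u')) * k)) / Dden d α₁ α₂ k -
        (α₁ * α₂ - k ^ 2) * (-Real.sin (k * (u - u')) * k) /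
          (Real.cos (2 * k * d) * Dden d α₁ α₂ k))
    from by simp only [Fker']; ring]
  simp only [Fker]; exact key

lemma hasDerivAt_Fker' (d α₁ α₂ k u' s u : ℝ) (hs : s = 1 ∨ s = -1) :
    HasDerivAt (fun u => Fker' d α₁ α₂ k u' s u) (-(k^2 * Fker d α₁ α₂ k u' s u)) u := by
  have h1 : HasDerivAt (fun v : ℝ => k * (2*d - s*(v-u'))) (-(k*s)) u := by
    simpa using ((((hasDerivAt_id u).sub_const u').const_mul s).const_sub (2*d)).const_mul k
  have h2 : HasDerivAt (fun v : ℝ => k * (v+u')) k u := by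
    simpa using ((hasDerivAt_id u).add_const u').const_mul k
  have h3 : HasDerivAt (fun v : ℝ => k * (v-u')) k u := by
    simpa using ((hasDerivAt_id u).sub_const u').const_mul k
  have key := (((((h1.cos.const_mul (-(k*s))).div_const (Real.cos (2*k*d))).sub
      ((((h2.cos.const_mul k).const_mul (k*(α₁-α₂))).add
        ((h2.sin.const_mul k).const_mul (α₁*α₂+k^2))).div_const (Dden d α₁ α₂ k))).add
      (((h3.sin.const_mul k).const_mul (α₁*α₂-k^2)).div_const
        (Real.cos (2*k*d) * Dden d α₁ α₂ k))).const_mul (1/(2*k*d^2)))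
  have hval : -(k^2 * Fker d α₁ α₂ k u' s u) =
      1 / (2 * k * d ^ 2) *
      (-(k * s) * (-Real.sin (k * (2 * d - s * (u - u'))) * -(k * s)) / Real.cos (2 * k * d) -
          (k * (α₁ - α₂) * (k * (-Real.sin (k * (u + u')) * k)) +
            (α₁ * α₂ + k ^ 2) * (k * (Real.cos (k * (u + u')) * k))) / Dden d α₁ α₂ k +
        (α₁ * α₂ - k ^ 2) * (k * (Real.cos (k * (u - u')) * k)) /
          (Real.cos (2 * k * d) * Dden d α₁ α₂ k)) := by
    rcases hs with h | h <;> subst h <;> simp only [Fker] <;> ring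
  rw [hval]
  simp only [Fker']
  exact key

lemma robin_right (d α₁ α₂ k u' : ℝ) (hd : 0 < d) (hk : 0 < k)
    (hcos : Real.cos (2 * k * d) ≠ 0) (hD : Dden d α₁ α₂ k ≠ 0) :
    Fker' d α₁ α₂ k u' 1 d + α₁ * Fker d α₁ α₂ k u' 1 d = 0 := by
  simp only [Fker, Fker', Dden] at *
  rw [show k * (2 * d - 1 * (d - u')) = k * (d + u') by ring]
  rw [show 2 * k * d = k * (d + u') + k * (d - u') by ring] at hcos hD ⊢
  rw [Real.cos_add] at hcos
  rw [Real.sin_add, Real.cos_add] at hD ⊢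
  set sa := Real.sin (k * (d + u'))
  set ca := Real.cos (k * (d + u'))
  set sb := Real.sin (k * (d - u'))
  set cb := Real.cos (k * (d - u'))
  have hres : (1/(2*k*d^2)) * ((α₁*α₂ - k^2) * (α₁*cb - k*sb) * (sa^2 + ca^2 - 1)) /
      ((ca*cb - sa*sb) * ((α₁*α₂ - k^2)*(sa*cb + ca*sb) + k*(α₁+α₂)*(ca*cb - sa*sb))) = 0 := by
    rw [show sa^2 + ca^2 = 1 from Real.sin_sq_add_cos_sq _]
    ring
  rw [← hres]
  generalize hDdef : (α₁ * α₂ - k ^ 2) * (sa * cb + ca * sb) + k * (α₁ + α₂) * (ca * cb - sa * sb) = D at hD ⊢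
  generalize hC : ca * cb - sa * sb = C at hcos ⊢
  field_simp
  subst hDdef hC
  ring

lemma robin_left (d α₁ α₂ k u' : ℝ) (hd : 0 < d) (hk : 0 < k)
    (hcos : Real.cos (2 * k * d) ≠ 0) (hD : Dden d α₁ α₂ k ≠ 0) :
    -Fker' d α₁ α₂ k u' (-1) (-d) + α₂ * Fker d α₁ α₂ k u' (-1) (-d) = 0 := by
  simp only [Fker, Fker', Dden] at *
  rw [show k * (2 * d - -1 * (-d - u')) = k * (d - u') by ring]
  rw [show k * (-d + u') = -(k * (d - u')) by ring]
  rw [show k * (-d - u') = -(k * (d + u')) by ring]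
  rw [Real.sin_neg, Real.cos_neg, Real.sin_neg, Real.cos_neg]
  rw [show 2 * k * d = k * (d + u') + k * (d - u') by ring] at hcos hD ⊢
  rw [Real.cos_add] at hcos
  rw [Real.sin_add, Real.cos_add] at hD ⊢
  set sa := Real.sin (k * (d + u'))
  set ca := Real.cos (k * (d + u'))
  set sb := Real.sin (k * (d - u'))
  set cb := Real.cos (k * (d - u'))
  have hres : (1/(2*k*d^2)) * ((α₁*α₂ - k^2) * (α₂*ca - k*sa) * (sb^2 + cb^2 - 1)) /
      ((ca*cb - sa*sb) * ((α₁*α₂ - k^2)*(sa*cb + ca*sb) + k*(α₁+α₂)*(ca*cb - sa*sb))) = 0 := by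
    rw [show sb^2 + cb^2 = 1 from Real.sin_sq_add_cos_sq _]
    ring
  rw [← hres]
  generalize hDdef : (α₁ * α₂ - k ^ 2) * (sa * cb + ca * sb) + k * (α₁ + α₂) * (ca * cb - sa * sb) = D at hD ⊢
  generalize hC : ca * cb - sa * sb = C at hcos ⊢
  field_simp
  subst hDdef hC
  ring

/-- The explicit kernel `g(u,u′)` is the Green function of the Robin
Laplacian on `(−d,d)` at energy `k²`: it is continuous, solves `−g″ = k²g` away from
`u′`, satisfies the Robin boundary conditions at `±d`, and its `u`-derivative has a jump
of size `−1/d²` across `u = u′`. -/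
theorem robin_resolvent_kernel_properties
    (d α₁ α₂ k : ℝ) (hd : 0 < d) (hk : 0 < k)
    (hcos : Real.cos (2 * k * d) ≠ 0) (hD : Dden d α₁ α₂ k ≠ 0)
    (u' : ℝ) (hu' : u' ∈ Set.Ioo (-d) d)
    (G : ℝ → ℝ) (hG : ∀ u : ℝ, G u = gker d α₁ α₂ k u u') :
    (ContinuousOn G (Set.Icc (-d) d) ∧
      ContDiffOn ℝ 2 G (Set.Ico (-d) u') ∧
      ContDiffOn ℝ 2 G (Set.Ioc u' d)) ∧
    (∀ u ∈ Set.Ioo (-d) d, u ≠ u' → deriv (deriv G) u = -(k ^ 2 * G u)) ∧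
    (deriv G d + α₁ * G d = 0 ∧ -deriv G (-d) + α₂ * G (-d) = 0) ∧
    (∃ Lp Lm : ℝ,
      Tendsto (deriv G) (𝓝[>] u') (𝓝 Lp) ∧
      Tendsto (deriv G) (𝓝[<] u') (𝓝 Lm) ∧
      Lp - Lm = -1 / d ^ 2) := by
  obtain ⟨hu'1, hu'2⟩ := hu'
  -- G agrees with the smooth branches
  have hEqR : ∀ v : ℝ, u' ≤ v → G v = Fker d α₁ α₂ k u' 1 v := by
    intro v hv
    rw [hG]
    simp only [gker, Fker]
    rw [abs_of_nonneg (by linarith : (0:ℝ) ≤ v - u')]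
    ring_nf
  have hEqL : ∀ v : ℝ, v ≤ u' → G v = Fker d α₁ α₂ k u' (-1) v := by
    intro v hv
    rw [hG]
    simp only [gker, Fker]
    rw [abs_of_nonpos (by linarith : v - u' ≤ 0)]
    ring_nf
  -- eventual equality and derivative formulas away from u'
  have hderR : ∀ v : ℝ, u' < v → deriv G v = Fker' d α₁ α₂ k u' 1 v := by
    intro v hv
    have hev : G =ᶠ[𝓝 v] fun w => Fker d α₁ α₂ k u' 1 w := by
      filter_upwards [eventually_gt_nhds hv] with w hw using hEqR w hw.le
    rw [hev.deriv_eq, (hasDerivAt_Fker d α₁ α₂ k u' 1 v).deriv]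
  have hderL : ∀ v : ℝ, v < u' → deriv G v = Fker' d α₁ α₂ k u' (-1) v := by
    intro v hv
    have hev : G =ᶠ[𝓝 v] fun w => Fker d α₁ α₂ k u' (-1) w := by
      filter_upwards [eventually_lt_nhds hv] with w hw using hEqL w hw.le
    rw [hev.deriv_eq, (hasDerivAt_Fker d α₁ α₂ k u' (-1) v).deriv]
  refine ⟨⟨?_, ?_, ?_⟩, ?_, ⟨?_, ?_⟩, ?_⟩
  · -- continuity
    have hGf : G = fun u => gker d α₁ α₂ k u u' := funext hG
    rw [hGf]
    apply Continuous.continuousOn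
    simp only [gker]
    have hs : Continuous Real.sin := Real.continuous_sin
    have hc : Continuous Real.cos := Real.continuous_cos
    have g1 : Continuous (fun u : ℝ => k * (2*d - |u - u'|)) := by fun_prop
    have g2 : Continuous (fun u : ℝ => k * (u+u')) := by fun_prop
    have g3 : Continuous (fun u : ℝ => k * (u-u')) := by fun_prop
    exact continuous_const.mul ((((hs.comp g1).div_const _).sub
      ((((continuous_const.mul (hs.comp g2))).sub
        (continuous_const.mul (hc.comp g2))).div_const _)).sub
      ((continuous_const.mul (hc.comp g3)).div_const _))
  · exact (contDiff_Fker d α₁ α₂ k u' (-1)).contDiffOn.congr fun v hv => hEqL v hv.2.le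
  · exact (contDiff_Fker d α₁ α₂ k u' 1).contDiffOn.congr fun v hv => hEqR v hv.1.le
  · -- the ODE away from u'
    intro u hu hne
    rcases hne.lt_or_gt with h | h
    · have hev : deriv G =ᶠ[𝓝 u] fun v => Fker' d α₁ α₂ k u' (-1) v := by
        filter_upwards [eventually_lt_nhds h] with v hv using hderL v hv
      rw [hev.deriv_eq, (hasDerivAt_Fker' d α₁ α₂ k u' (-1) u (Or.inr rfl)).deriv,
        hEqL u h.le]
    · have hev : deriv G =ᶠ[𝓝 u] fun v => Fker' d α₁ α₂ k u' 1 v := by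
        filter_upwards [eventually_gt_nhds h] with v hv using hderR v hv
      rw [hev.deriv_eq, (hasDerivAt_Fker' d α₁ α₂ k u' 1 u (Or.inl rfl)).deriv,
        hEqR u h.le]
  · rw [hderR d hu'2, hEqR d hu'2.le]
    exact robin_right d α₁ α₂ k u' hd hk hcos hD
  · rw [hderL (-d) hu'1, hEqL (-d) hu'1.le]
    exact robin_left d α₁ α₂ k u' hd hk hcos hD
  · refine ⟨Fker' d α₁ α₂ k u' 1 u', Fker' d α₁ α₂ k u' (-1) u', ?_, ?_, ?_⟩
    · have h1 : Tendsto (fun v => Fker' d α₁ α₂ k u' 1 v) (𝓝[>] u')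
          (𝓝 (Fker' d α₁ α₂ k u' 1 u')) :=
        ((hasDerivAt_Fker' d α₁ α₂ k u' 1 u' (Or.inl rfl)).continuousAt.tendsto).mono_left
          nhdsWithin_le_nhds
      exact h1.congr' (by filter_upwards [self_mem_nhdsWithin] with v hv
        using (hderR v hv).symm)
    · have h1 : Tendsto (fun v => Fker' d α₁ α₂ k u' (-1) v) (𝓝[<] u')
          (𝓝 (Fker' d α₁ α₂ k u' (-1) u')) :=
        ((hasDerivAt_Fker' d α₁ α₂ k u' (-1) u' (Or.inr rfl)).continuousAt.tendsto).mono_left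
          nhdsWithin_le_nhds
      exact h1.congr' (by filter_upwards [self_mem_nhdsWithin] with v hv
        using (hderL v hv).symm)
    · simp only [Fker']
      rw [show k * (2 * d - 1 * (u' - u')) = 2 * k * d by ring,
        show k * (2 * d - -1 * (u' - u')) = 2 * k * d by ring]
      field_simp
      ring
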